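/- The 12 vectors χ_{ij} (i, j ∈ {1,2,3,4}, i ≠ j) are linearly independent in (ℂ²⊗ℂ²) ⊗ (ℂ²⊗ℂ²) ≅ ℂ^16; i.e., the span of the 2-CLSM set S^{↑↓}_{(2)} has dimension 12. -/

import Mathlib

/-!
Statement 9: The 12 vectors χ_{ij} = (s_i ⊗ s_j) ⊗ (s_i^⊥ ⊗ s_j^⊥) (i ≠ j) are linearly
independent in (ℂ²⊗ℂ²) ⊗ (ℂ²⊗ℂ²) ≅ ℂ¹⁶; i.e. the span of the 2-CLSM set S^{↑↓}_{(2)}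
has dimension 12.
-/

noncomputable section
open scoped ComplexInnerProductSpace

/-- The qubit Hilbert space `ℂ²`. -/
abbrev Qubit : Type := EuclideanSpace ℂ (Fin 2)

/-- The (Kronecker) tensor product of two vectors, realized in `EuclideanSpace ℂ (ι × κ)`. -/
def tp {ι κ : Type} (x : EuclideanSpace ℂ ι) (y : EuclideanSpace ℂ κ) :
    EuclideanSpace ℂ (ι × κ) :=
  (WithLp.equiv 2 (ι × κ → ℂ)).symm (fun p => x p.1 * y p.2)

/-- A qubit vector from its two coordinates. -/
def mk2 (a b : ℂ) : Qubit := (WithLp.equiv 2 (Fin 2 → ℂ)).symm ![a, b]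

/-- The cube root of unity phases `ζ k = exp(2πik/3)`. -/
def ζ (k : ℤ) : ℂ := Complex.exp (2 * (Real.pi : ℂ) * Complex.I * (k : ℂ) / 3)

/-- `1/√3` in `ℂ`. -/
def r3 : ℂ := ((Real.sqrt 3 : ℂ))⁻¹

/-- `√2` in `ℂ`. -/
def r2 : ℂ := (Real.sqrt 2 : ℂ)

/-- The qubit SIC states: `s 0 = |0⟩` and
`s j = (1/√3)(|0⟩ + √2 e^{2πi(j-1)/3} |1⟩)` for `j = 1, 2, 3`
(indexing the paper's `s_1, …, s_4` by `Fin 4`). -/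
def s : Fin 4 → Qubit :=
  ![mk2 1 0,
    mk2 r3 (r3 * r2 * ζ 0),
    mk2 r3 (r3 * r2 * ζ 1),
    mk2 r3 (r3 * r2 * ζ 2)]

/-- The orthogonal SIC states: `sperp 0 = |1⟩` and
`sperp j = (1/√3)(√2 e^{-2πi(j-1)/3} |0⟩ - |1⟩)` for `j = 1, 2, 3`. -/
def sperp : Fin 4 → Qubit :=
  ![mk2 0 1,
    mk2 (r3 * r2 * ζ 0) (-r3),
    mk2 (r3 * r2 * ζ (-1)) (-r3),
    mk2 (r3 * r2 * ζ (-2)) (-r3)]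

/-- The 2-CLSM vectors `χ_{ij} = (s_i ⊗ s_j) ⊗ (s_i^⊥ ⊗ s_j^⊥)`, the first `ℂ⁴` factor
being Alice's system and the second Bob's. -/
def χ (i j : Fin 4) : EuclideanSpace ℂ ((Fin 2 × Fin 2) × (Fin 2 × Fin 2)) :=
  tp (tp (s i) (s j)) (tp (sperp i) (sperp j))


-- ## Auxiliary facts

lemma hr3 : r3 * r3 = 1/3 := by
  rw [r3, ← mul_inv, ← Complex.ofReal_mul, Real.mul_self_sqrt (by norm_num)]
  norm_num

lemma hr2 : r2 * r2 = 2 := by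
  rw [r2, ← Complex.ofReal_mul, Real.mul_self_sqrt (by norm_num)]; norm_num

lemma cr3 : (starRingEnd ℂ) r3 = r3 := by
  simp [r3, Complex.conj_ofReal]

lemma cr2 : (starRingEnd ℂ) r2 = r2 := by simp [r2, Complex.conj_ofReal]

lemma ζ_conj (k : ℤ) : (starRingEnd ℂ) (ζ k) = ζ (-k) := by
  rw [ζ, ζ, ← Complex.exp_conj]
  congr 1
  have : (starRingEnd ℂ) (2 * (Real.pi : ℂ) * Complex.I * ((k:ℤ) : ℂ) / 3)
      = 2 * (Real.pi : ℂ) * (-Complex.I) * ((k:ℤ) : ℂ) / 3 := by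
    simp [map_div₀, Complex.conj_ofReal, map_ofNat]
  rw [this]
  push_cast
  ring

lemma ζ_add (a b : ℤ) : ζ (a + b) = ζ a * ζ b := by
  rw [ζ, ζ, ζ, ← Complex.exp_add]
  congr 1
  push_cast
  ring

lemma ζ0 : ζ 0 = 1 := by simp [ζ]

lemma ζ3 : ζ 3 = 1 := by
  rw [ζ]
  have : 2 * (Real.pi : ℂ) * Complex.I * ((3:ℤ) : ℂ) / 3 = 2 * Real.pi * Complex.I := by
    push_cast; ring
  rw [this, Complex.exp_two_pi_mul_I]

lemma ζ1_ne_one : ζ 1 ≠ 1 := by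
  rw [ζ]
  intro h
  rw [Complex.exp_eq_one_iff] at h
  obtain ⟨n, hn⟩ := h
  have h3 : ((3 * n : ℤ) : ℂ) = 1 := by
    push_cast at hn ⊢
    have hπ : (Real.pi : ℂ) ≠ 0 := by exact_mod_cast Real.pi_ne_zero
    have hne : (2*(Real.pi:ℂ)*Complex.I) ≠ 0 := by
      simp [hπ, Complex.I_ne_zero]
    have key : (2*(Real.pi:ℂ)*Complex.I) * (3*n) = (2*(Real.pi:ℂ)*Complex.I) * 1 := by
      linear_combination (-3) * hn
    have := mul_left_cancel₀ hne key
    linear_combination this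
  have : (3 * n : ℤ) = 1 := by exact_mod_cast h3
  omega

lemma hω : ζ 1 ^ 2 + ζ 1 + 1 = 0 := by
  have h3 : ζ 1 ^ 3 = 1 := by
    have := ζ_add 1 2; have h2 := ζ_add 1 1
    norm_num at this h2
    rw [h2] at this
    rw [← ζ3]; rw [this]; ring
  have := mul_eq_zero.mp (show (ζ 1 - 1) * (ζ 1 ^ 2 + ζ 1 + 1) = 0 by linear_combination h3)
  rcases this with h | h
  · exact ((ζ1_ne_one (by linear_combination h)).elim : _)
  · exact h

lemma ζ2eq : ζ 2 = ζ 1 ^ 2 := by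
  have := ζ_add 1 1; norm_num at this; rw [this]; ring

lemma ζm1eq : ζ (-1) = ζ 1 ^ 2 := by
  have := ζ_add (-1) 3; norm_num [ζ3] at this; rw [← this, ζ2eq]

lemma ζm2eq : ζ (-2) = ζ 1 := by
  have := ζ_add (-2) 3; norm_num [ζ3] at this; rw [← this]

lemma cζ1 : (starRingEnd ℂ) (ζ 1) = ζ 1 ^ 2 := by rw [ζ_conj, ζm1eq]

lemma cζ2 : (starRingEnd ℂ) (ζ 2) = ζ 1 := by rw [ζ_conj, ζm2eq]

lemma inner_tp {ι κ : Type} [Fintype ι] [Fintype κ] (x u : EuclideanSpace ℂ ι)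
    (y v : EuclideanSpace ℂ κ) : ⟪tp x y, tp u v⟫ = ⟪x, u⟫ * ⟪y, v⟫ := by
  simp only [tp, PiLp.inner_apply, WithLp.equiv_symm_apply, PiLp.toLp_apply, WithLp.ofLp_toLp, map_mul, RCLike.inner_apply]
  rw [Finset.sum_mul_sum, ← Finset.univ_product_univ, Finset.sum_product]
  exact Finset.sum_congr rfl fun i _ => Finset.sum_congr rfl fun k _ => by ring

lemma mk2_app0 (a b : ℂ) : mk2 a b (0 : Fin 2) = a := rfl
lemma mk2_app1 (a b : ℂ) : mk2 a b (1 : Fin 2) = b := rfl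

lemma inner_mk2 (a b c d : ℂ) : ⟪mk2 a b, mk2 c d⟫ =
    (starRingEnd ℂ) a * c + (starRingEnd ℂ) b * d := by
  simp [mk2, PiLp.inner_apply, Fin.sum_univ_two, RCLike.inner_apply]
  ring

/-- Signs `ε`. -/
def ε : Fin 4 → ℂ := ![-1, 1, 1, 1]

/-- Effective Gram data. -/
def cmat (i j : Fin 4) : ℂ := ε i * ε j * (if i = j then 1 else 1/3)

lemma gh (m i : Fin 4) : ⟪s m, s i⟫ * ⟪sperp m, sperp i⟫ = cmat m i := by
  fin_cases m <;> fin_cases i <;>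
    simp only [s, sperp, cmat, ε, Matrix.cons_val_zero, Matrix.cons_val_one, Matrix.head_cons,
      Matrix.cons_val_two, Matrix.cons_val_three, Matrix.tail_cons, inner_mk2,
      ζ0, ζ2eq, ζm1eq, ζm2eq, map_one, map_zero, map_mul, map_neg, map_pow,
      cr3, cr2, cζ1, cζ2, Fin.mk_zero, Fin.mk_one, mk2_app0, mk2_app1] <;>
    norm_num [-inner_self_eq_norm_sq_to_K, inner_mk2, Fin.ext_iff, mk2_app0, mk2_app1, cr3, cr2, cζ1, cζ2, ζ0, ζ2eq, ζm1eq, ζm2eq, map_mul, map_pow, map_neg]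
  · linear_combination hr3
  · linear_combination hr3
  · linear_combination hr3
  · linear_combination hr3
  · linear_combination (r3^2*r2^4 + (2)*r3^2*r2^2 + r3^2 + (1/3)*r2^4 + (2/3)*r2^2 + (1/3)) * hr3 + ((1/9)*r2^2 + (4/9)) * hr2 + (0) * hω
  · linear_combination (r3^2*r2^4*(ζ 1)^3 + r3^2*r2^2*(ζ 1)^2 + r3^2*r2^2*(ζ 1) + r3^2 + (1/3)*r2^4*(ζ 1)^3 + (1/3)*r2^2*(ζ 1)^2 + (1/3)*r2^2*(ζ 1) + (1/3)) * hr3 + ((1/9)*r2^2*(ζ 1)^3 + (2/9)*(ζ 1)^3 + (1/9)*(ζ 1)^2 + (1/9)*(ζ 1)) * hr2 + ((4/9)*(ζ 1) + (-2/9)) * hω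
  · linear_combination (r3^2*r2^4*(ζ 1)^3 + r3^2*r2^2*(ζ 1)^2 + r3^2*r2^2*(ζ 1) + r3^2 + (1/3)*r2^4*(ζ 1)^3 + (1/3)*r2^2*(ζ 1)^2 + (1/3)*r2^2*(ζ 1) + (1/3)) * hr3 + ((1/9)*r2^2*(ζ 1)^3 + (2/9)*(ζ 1)^3 + (1/9)*(ζ 1)^2 + (1/9)*(ζ 1)) * hr2 + ((4/9)*(ζ 1) + (-2/9)) * hω
  · linear_combination hr3
  · linear_combination (r3^2*r2^4*(ζ 1)^6 + r3^2*r2^2*(ζ 1)^4 + r3^2*r2^2*(ζ 1)^2 + r3^2 + (1/3)*r2^4*(ζ 1)^6 + (1/3)*r2^2*(ζ 1)^4 + (1/3)*r2^2*(ζ 1)^2 + (1/3)) * hr3 + ((1/9)*r2^2*(ζ 1)^6 + (2/9)*(ζ 1)^6 + (1/9)*(ζ 1)^4 + (1/9)*(ζ 1)^2) * hr2 + ((4/9)*(ζ 1)^4 + (-4/9)*(ζ 1)^3 + (2/9)*(ζ 1)^2 + (2/9)*(ζ 1) + (-2/9)) * hω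
  · linear_combination (r3^2*r2^4*(ζ 1)^9 + r3^2*r2^2*(ζ 1)^6 + r3^2*r2^2*(ζ 1)^3 + r3^2 + (1/3)*r2^4*(ζ 1)^9 + (1/3)*r2^2*(ζ 1)^6 + (1/3)*r2^2*(ζ 1)^3 + (1/3)) * hr3 + ((1/9)*r2^2*(ζ 1)^9 + (2/9)*(ζ 1)^9 + (1/9)*(ζ 1)^6 + (1/9)*(ζ 1)^3) * hr2 + ((4/9)*(ζ 1)^7 + (-4/9)*(ζ 1)^6 + (2/3)*(ζ 1)^4 + (-2/3)*(ζ 1)^3 + (8/9)*(ζ 1) + (-8/9)) * hω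
  · linear_combination (r3^2*r2^4*(ζ 1)^9 + r3^2*r2^2*(ζ 1)^5 + r3^2*r2^2*(ζ 1)^4 + r3^2 + (1/3)*r2^4*(ζ 1)^9 + (1/3)*r2^2*(ζ 1)^5 + (1/3)*r2^2*(ζ 1)^4 + (1/3)) * hr3 + ((1/9)*r2^2*(ζ 1)^9 + (2/9)*(ζ 1)^9 + (1/9)*(ζ 1)^5 + (1/9)*(ζ 1)^4) * hr2 + ((4/9)*(ζ 1)^7 + (-4/9)*(ζ 1)^6 + (4/9)*(ζ 1)^4 + (-2/9)*(ζ 1)^3 + (2/9)*(ζ 1) + (-2/9)) * hω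
  · linear_combination hr3
  · linear_combination (r3^2*r2^4*(ζ 1)^6 + r3^2*r2^2*(ζ 1)^4 + r3^2*r2^2*(ζ 1)^2 + r3^2 + (1/3)*r2^4*(ζ 1)^6 + (1/3)*r2^2*(ζ 1)^4 + (1/3)*r2^2*(ζ 1)^2 + (1/3)) * hr3 + ((1/9)*r2^2*(ζ 1)^6 + (2/9)*(ζ 1)^6 + (1/9)*(ζ 1)^4 + (1/9)*(ζ 1)^2) * hr2 + ((4/9)*(ζ 1)^4 + (-4/9)*(ζ 1)^3 + (2/9)*(ζ 1)^2 + (2/9)*(ζ 1) + (-2/9)) * hω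
  · linear_combination (r3^2*r2^4*(ζ 1)^9 + r3^2*r2^2*(ζ 1)^5 + r3^2*r2^2*(ζ 1)^4 + r3^2 + (1/3)*r2^4*(ζ 1)^9 + (1/3)*r2^2*(ζ 1)^5 + (1/3)*r2^2*(ζ 1)^4 + (1/3)) * hr3 + ((1/9)*r2^2*(ζ 1)^9 + (2/9)*(ζ 1)^9 + (1/9)*(ζ 1)^5 + (1/9)*(ζ 1)^4) * hr2 + ((4/9)*(ζ 1)^7 + (-4/9)*(ζ 1)^6 + (4/9)*(ζ 1)^4 + (-2/9)*(ζ 1)^3 + (2/9)*(ζ 1) + (-2/9)) * hω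
  · linear_combination (r3^2*r2^4*(ζ 1)^9 + r3^2*r2^2*(ζ 1)^6 + r3^2*r2^2*(ζ 1)^3 + r3^2 + (1/3)*r2^4*(ζ 1)^9 + (1/3)*r2^2*(ζ 1)^6 + (1/3)*r2^2*(ζ 1)^3 + (1/3)) * hr3 + ((1/9)*r2^2*(ζ 1)^9 + (2/9)*(ζ 1)^9 + (1/9)*(ζ 1)^6 + (1/9)*(ζ 1)^3) * hr2 + ((4/9)*(ζ 1)^7 + (-4/9)*(ζ 1)^6 + (2/3)*(ζ 1)^4 + (-2/3)*(ζ 1)^3 + (8/9)*(ζ 1) + (-8/9)) * hω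

lemma gram (m n i j : Fin 4) : ⟪χ m n, χ i j⟫ = cmat m i * cmat n j := by
  rw [χ, χ, inner_tp, inner_tp, inner_tp, ← gh m i, ← gh n j]
  ring

/-- Inverse Gram data. -/
def bmat (k m : Fin 4) : ℂ := ε k * ε m * (if k = m then 5/4 else -(1/4))

lemma binv (k i : Fin 4) :
    (∑ m, (starRingEnd ℂ) (bmat k m) * cmat m i) = if k = i then 1 else 0 := by
  fin_cases k <;> fin_cases i <;>
    simp (config := { decide := true }) only [Fin.sum_univ_four, bmat, cmat, ε,
      Matrix.cons_val_zero, Matrix.cons_val_one, Matrix.head_cons, Matrix.cons_val_two,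
      Matrix.tail_cons, Matrix.cons_val_three, if_true, if_false] <;>
    norm_num [map_ofNat, map_div₀, map_neg, map_one, map_inv₀]

/-- Dual family. -/
def yv (k l : Fin 4) : EuclideanSpace ℂ ((Fin 2 × Fin 2) × (Fin 2 × Fin 2)) :=
  ∑ m, ∑ n, (bmat k m * bmat l n) • χ m n

lemma inner_yv (k l i j : Fin 4) :
    ⟪yv k l, χ i j⟫ = (if k = i then 1 else 0) * (if l = j then 1 else 0) := by
  rw [yv]
  rw [sum_inner]
  have step : ∀ m : Fin 4, ⟪∑ n, (bmat k m * bmat l n) • χ m n, χ i j⟫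
      = ((starRingEnd ℂ) (bmat k m) * cmat m i) *
        (∑ n, (starRingEnd ℂ) (bmat l n) * cmat n j) := by
    intro m
    rw [sum_inner, Finset.mul_sum]
    refine Finset.sum_congr rfl fun n _ => ?_
    rw [inner_smul_left, gram, map_mul]
    ring
  rw [Finset.sum_congr rfl fun m _ => step m, ← Finset.sum_mul, binv, binv]


/-- The 12 vectors `χ_{ij}` (`i ≠ j`) are linearly independent; equivalently their span
has dimension 12. -/
theorem antiparallel_double_SIC_2CLSM_linearly_independent :
    LinearIndependent ℂ (fun p : {p : Fin 4 × Fin 4 // p.1 ≠ p.2} => χ p.1.1 p.1.2) ∧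
    Module.finrank ℂ
      ↥(Submodule.span ℂ
        (Set.range fun p : {p : Fin 4 × Fin 4 // p.1 ≠ p.2} => χ p.1.1 p.1.2)) = 12 := by
  have hli : LinearIndependent ℂ (fun p : {p : Fin 4 × Fin 4 // p.1 ≠ p.2} => χ p.1.1 p.1.2) := by
    rw [Fintype.linearIndependent_iff]
    intro g hg p
    have h0 : ⟪yv p.1.1 p.1.2, (∑ q : {p : Fin 4 × Fin 4 // p.1 ≠ p.2}, g q • χ q.1.1 q.1.2)⟫
        = 0 := by rw [hg, inner_zero_right]
    rw [inner_sum] at h0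
    have hterm : ∀ q : {p : Fin 4 × Fin 4 // p.1 ≠ p.2},
        ⟪yv p.1.1 p.1.2, g q • χ q.1.1 q.1.2⟫
        = g q * ((if p.1.1 = q.1.1 then 1 else 0) * (if p.1.2 = q.1.2 then 1 else 0)) := by
      intro q
      rw [inner_smul_right, inner_yv]
    rw [Finset.sum_congr rfl fun q _ => hterm q] at h0
    rw [Finset.sum_eq_single p] at h0
    · simpa using h0
    · intro q _ hq
      rcases eq_or_ne p.1.1 q.1.1 with h1 | h1
      · rcases eq_or_ne p.1.2 q.1.2 with h2 | h2
        · exact absurd (Subtype.ext (Prod.ext h1 h2)) (Ne.symm hq)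
        · simp [h2]
      · simp [h1]
    · intro hp
      exact absurd (Finset.mem_univ p) hp
  refine ⟨hli, ?_⟩
  rw [finrank_span_eq_card hli]
  decide
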